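/- Let u, v, ψ̃ be unit vectors in a complex Hilbert space, and let f, c ∈ [0,1] with f ≤ c. If |⟨u|v⟩| ≤ f and |⟨v|ψ̃⟩| ≥ c, then |⟨u|ψ̃⟩| ≤ f·c + √(1−f²)·√(1−c²). -/

import Mathlib

open Real

private lemma arccos_anti {x y : ℝ} (h : x ≤ y) : Real.arccos y ≤ Real.arccos x := by
  unfold Real.arccos
  have := Real.monotone_arcsin h
  linarith

private lemma cos_form {x y : ℝ} (hx1 : -1 ≤ x) (hx2 : x ≤ 1) (hy1 : -1 ≤ y) (hy2 : y ≤ 1) :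
    Real.cos (Real.arccos x - Real.arccos y)
      = x * y + Real.sqrt (1 - x ^ 2) * Real.sqrt (1 - y ^ 2) := by
  rw [Real.cos_sub, Real.cos_arccos hx1 hx2, Real.cos_arccos hy1 hy2,
    Real.sin_arccos, Real.sin_arccos]

private lemma lemB {a b f c : ℝ} (ha : 0 ≤ a) (haf : a ≤ f) (hfc : f ≤ c) (hcb : c ≤ b)
    (hb1 : b ≤ 1) :
    a * b + Real.sqrt (1 - a ^ 2) * Real.sqrt (1 - b ^ 2)
      ≤ f * c + Real.sqrt (1 - f ^ 2) * Real.sqrt (1 - c ^ 2) := by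
  have ha2 : a ≤ 1 := by linarith
  have hf0 : 0 ≤ f := by linarith
  have hf1 : f ≤ 1 := by linarith
  have hc0 : 0 ≤ c := by linarith
  have hc1 : c ≤ 1 := by linarith
  have hb0 : 0 ≤ b := by linarith
  rw [← cos_form (by linarith) ha2 (by linarith) hb1,
      ← cos_form (by linarith) hf1 (by linarith) hc1]
  apply Real.cos_le_cos_of_nonneg_of_le_pi
  · have := arccos_anti hfc
    linarith
  · have h1 := Real.arccos_le_pi a
    have h2 := Real.arccos_nonneg b
    linarith
  · have h1 := arccos_anti haf
    have h2 := arccos_anti hcb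
    linarith

private lemma perp_norm_sq {H : Type*} [NormedAddCommGroup H] [InnerProductSpace ℂ H]
    (v x : H) (hv : ‖v‖ = 1) (hx : ‖x‖ = 1) :
    ‖x - (inner ℂ v x : ℂ) • v‖ ^ 2 = 1 - ‖(inner ℂ v x : ℂ)‖ ^ 2 := by
  rw [norm_sub_sq (𝕜 := ℂ)]
  rw [inner_smul_right, norm_smul, hv, hx]
  simp only [mul_one, one_pow]
  have : (inner ℂ x v : ℂ) = starRingEnd ℂ (inner ℂ v x) := by rw [inner_conj_symm]
  rw [this]
  have hre : RCLike.re ((inner ℂ v x : ℂ) * starRingEnd ℂ (inner ℂ v x : ℂ))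
      = ‖(inner ℂ v x : ℂ)‖ ^ 2 := by
    rw [RCLike.mul_conj]
    simp [← Complex.ofReal_pow]
  rw [mul_comm, hre]
  ring

private lemma lemA {H : Type*} [NormedAddCommGroup H] [InnerProductSpace ℂ H]
    (u v w : H) (hu : ‖u‖ = 1) (hv : ‖v‖ = 1) (hw : ‖w‖ = 1) :
    ‖(inner ℂ u w : ℂ)‖ ≤ ‖(inner ℂ u v : ℂ)‖ * ‖(inner ℂ v w : ℂ)‖ +
      Real.sqrt (1 - ‖(inner ℂ u v : ℂ)‖ ^ 2) * Real.sqrt (1 - ‖(inner ℂ v w : ℂ)‖ ^ 2) := by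
  set a : ℂ := inner ℂ v u with ha
  set b : ℂ := inner ℂ v w with hb
  have hvv : (inner ℂ v v : ℂ) = 1 := by
    rw [inner_self_eq_norm_sq_to_K, hv]; norm_num
  have key : (inner ℂ u w : ℂ) = (inner ℂ u v : ℂ) * b + inner ℂ (u - a • v) (w - b • v) := by
    simp only [inner_sub_left, inner_sub_right, inner_smul_left, inner_smul_right, hvv, mul_one,
      ha, hb, inner_conj_symm]
    ring
  have hperp : ‖(inner ℂ (u - a • v) (w - b • v) : ℂ)‖ ≤
      Real.sqrt (1 - ‖(inner ℂ u v : ℂ)‖ ^ 2) * Real.sqrt (1 - ‖(inner ℂ v w : ℂ)‖ ^ 2) := by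
    calc ‖(inner ℂ (u - a • v) (w - b • v) : ℂ)‖ ≤ ‖u - a • v‖ * ‖w - b • v‖ :=
          norm_inner_le_norm _ _
      _ = Real.sqrt (1 - ‖(inner ℂ u v : ℂ)‖ ^ 2) * Real.sqrt (1 - ‖(inner ℂ v w : ℂ)‖ ^ 2) := by
          have h1 : ‖u - a • v‖ ^ 2 = 1 - ‖(inner ℂ v u : ℂ)‖ ^ 2 := perp_norm_sq v u hv hu
          have h2 : ‖w - b • v‖ ^ 2 = 1 - ‖(inner ℂ v w : ℂ)‖ ^ 2 := perp_norm_sq v w hv hw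
          have e1 : ‖u - a • v‖ = Real.sqrt (1 - ‖(inner ℂ u v : ℂ)‖ ^ 2) := by
            rw [← Real.sqrt_sq (norm_nonneg _), h1, ← norm_inner_symm u v]
          have e2 : ‖w - b • v‖ = Real.sqrt (1 - ‖(inner ℂ v w : ℂ)‖ ^ 2) := by
            rw [← Real.sqrt_sq (norm_nonneg _), h2]
          rw [e1, e2]
  calc ‖(inner ℂ u w : ℂ)‖ ≤ ‖(inner ℂ u v : ℂ) * b‖ + ‖(inner ℂ (u - a • v) (w - b • v) : ℂ)‖ := by
        rw [key]; exact norm_add_le _ _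
    _ ≤ ‖(inner ℂ u v : ℂ)‖ * ‖(inner ℂ v w : ℂ)‖ +
        Real.sqrt (1 - ‖(inner ℂ u v : ℂ)‖ ^ 2) * Real.sqrt (1 - ‖(inner ℂ v w : ℂ)‖ ^ 2) := by
        rw [norm_mul]
        exact add_le_add le_rfl hperp

theorem stmt_4 {H : Type*} [NormedAddCommGroup H] [InnerProductSpace ℂ H]
    (u v ψt : H) (hu : ‖u‖ = 1) (hv : ‖v‖ = 1) (hψ : ‖ψt‖ = 1)
    (f c : ℝ) (hf0 : 0 ≤ f) (hc1 : c ≤ 1) (hfc : f ≤ c)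
    (h1 : ‖(inner ℂ u v : ℂ)‖ ≤ f) (h2 : c ≤ ‖(inner ℂ v ψt : ℂ)‖) :
    ‖(inner ℂ u ψt : ℂ)‖ ≤ f * c + Real.sqrt (1 - f ^ 2) * Real.sqrt (1 - c ^ 2) := by
  have hA := lemA u v ψt hu hv hψ
  have hb1 : ‖(inner ℂ v ψt : ℂ)‖ ≤ 1 := by
    have := norm_inner_le_norm (𝕜 := ℂ) v ψt
    rwa [hv, hψ, one_mul] at this
  -- note h1 could have ‖inner ℂ u v‖ > c? no: ≤ f ≤ c. monotonicity in a: need a ≤ f, ok.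
  have hB := lemB (norm_nonneg (inner ℂ u v : ℂ)) h1 hfc h2 hb1
  linarith
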